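/- Fix integers n, m ≥ 1 and constants ḡ > 0, δ̄ ≥ 0. Let g be a real n×m matrix with λ_min(g·gᵀ) ≥ ḡ², and let δ be a real n×m matrix with induced 2-norm ‖δ‖ ≤ δ̄. Let p ∈ ℝ^n with p ≠ 0, let F ∈ ℝ^n, u, w ∈ ℝ^m, and β ∈ ℝ. If ⟨gᵀp/‖gᵀp‖, u⟩ + (δ̄/ḡ)·‖u‖ ≤ −β, then ⟨p, F + (g+δ)(u+w)⟩ ≤ −‖gᵀp‖·( β − ‖F‖/ḡ − (1 + δ̄/ḡ)·‖w‖ ). -/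
import Mathlib


open scoped RealInnerProductSpace

/-- The pointwise robust dissipation inequality (Appendix B, establishing (19)) of
the paper. The eigenvalue condition `λ_min(g gᵀ) ≥ ḡ²` is encoded by its equivalent
form `‖gᵀ p‖ ≥ ḡ ‖p‖` for all `p`, and matrices are represented by continuous linear
maps between Euclidean spaces, whose operator norm is the induced 2-norm. -/
theorem stmt3 (n m : ℕ) (hn : 1 ≤ n) (hm : 1 ≤ m)
    (gbar δbar : ℝ) (hg : 0 < gbar) (hδ0 : 0 ≤ δbar)
    (g δ : EuclideanSpace ℝ (Fin m) →L[ℝ] EuclideanSpace ℝ (Fin n))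
    (hgmin : ∀ p : EuclideanSpace ℝ (Fin n),
      gbar * ‖p‖ ≤ ‖ContinuousLinearMap.adjoint g p‖)
    (hδnorm : ‖δ‖ ≤ δbar)
    (p : EuclideanSpace ℝ (Fin n)) (hp : p ≠ 0)
    (F : EuclideanSpace ℝ (Fin n)) (u w : EuclideanSpace ℝ (Fin m)) (β : ℝ)
    (hu : ⟪(‖ContinuousLinearMap.adjoint g p‖)⁻¹ • ContinuousLinearMap.adjoint g p, u⟫
        + δbar / gbar * ‖u‖ ≤ -β) :
    ⟪p, F + (g + δ) (u + w)⟫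
      ≤ -(‖ContinuousLinearMap.adjoint g p‖
          * (β - ‖F‖ / gbar - (1 + δbar / gbar) * ‖w‖)) := by
  set q := ContinuousLinearMap.adjoint g p with hqdef
  have hpn : 0 < ‖p‖ := norm_pos_iff.mpr hp
  have hq : 0 < ‖q‖ := lt_of_lt_of_le (by positivity) (hgmin p)
  have hpq : ‖p‖ ≤ ‖q‖ / gbar := (le_div_iff₀' hg).mpr (hgmin p)
  -- bound on ⟪q, u⟫
  have h1 : ⟪q, u⟫ ≤ ‖q‖ * (-β - δbar / gbar * ‖u‖) := by
    rw [real_inner_smul_left] at hu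
    have := mul_le_mul_of_nonneg_left (by linarith : (‖q‖)⁻¹ * ⟪q, u⟫ ≤ -β - δbar / gbar * ‖u‖) hq.le
    rw [mul_inv_cancel_left₀ hq.ne'] at this
    linarith
  have h2 : ⟪p, F⟫ ≤ ‖q‖ / gbar * ‖F‖ :=
    le_trans (real_inner_le_norm p F) (mul_le_mul_of_nonneg_right hpq (norm_nonneg F))
  have h3 : ⟪p, δ (u + w)⟫ ≤ δbar * (‖q‖ / gbar) * (‖u‖ + ‖w‖) := by
    calc ⟪p, δ (u + w)⟫ ≤ ‖p‖ * ‖δ (u + w)‖ := real_inner_le_norm _ _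
      _ ≤ ‖p‖ * (‖δ‖ * ‖u + w‖) := by
          exact mul_le_mul_of_nonneg_left (δ.le_opNorm _) (norm_nonneg p)
      _ ≤ (‖q‖ / gbar) * (δbar * (‖u‖ + ‖w‖)) := by
          apply mul_le_mul hpq
          · exact mul_le_mul hδnorm (norm_add_le u w) (norm_nonneg _) hδ0
          · positivity
          · positivity
      _ = δbar * (‖q‖ / gbar) * (‖u‖ + ‖w‖) := by ring
  have h4 : ⟪q, w⟫ ≤ ‖q‖ * ‖w‖ := real_inner_le_norm q w
  have hsplit : ⟪p, F + (g + δ) (u + w)⟫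
      = ⟪p, F⟫ + (⟪q, u⟫ + ⟪q, w⟫) + ⟪p, δ (u + w)⟫ := by
    rw [inner_add_right]
    simp only [ContinuousLinearMap.add_apply, inner_add_right, hqdef,
      ContinuousLinearMap.adjoint_inner_left, map_add]
    ring
  rw [hsplit]
  have key : ‖q‖ / gbar * ‖F‖ + (‖q‖ * (-β - δbar / gbar * ‖u‖) + ‖q‖ * ‖w‖)
      + δbar * (‖q‖ / gbar) * (‖u‖ + ‖w‖)
      = -(‖q‖ * (β - ‖F‖ / gbar - (1 + δbar / gbar) * ‖w‖)) := by
    field_simp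
    ring
  linarith
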